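/- Let α ∈ ℝ, δ > 0 and τ ≥ 2 be such that |α − p/q| > δ/|q|^τ for all integers p and all nonzero integers q. Then for every nonzero integer k, |1 − exp(2πikα)| > 4δ/|k|^{τ−1}. -/

import Mathlib

lemma abs_one_sub_exp (x : ℝ) :
    ‖1 - Complex.exp ((2 * x : ℝ) * Complex.I)‖ = 2 * |Real.sin x| := by
  have hexp : Complex.exp ((2 * x : ℝ) * Complex.I) =
      Complex.exp ((x : ℝ) * Complex.I) * Complex.exp ((x : ℝ) * Complex.I) := by
    rw [← Complex.exp_add]; push_cast; ring_nf
  have key : (1 : ℂ) - Complex.exp ((2 * x : ℝ) * Complex.I) =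
      -Complex.exp ((x : ℝ) * Complex.I) * (2 * Complex.sin x * Complex.I) := by
    have h1 : Complex.exp (-(x:ℂ) * Complex.I) * Complex.exp ((x:ℂ) * Complex.I) = 1 := by
      rw [← Complex.exp_add]; ring_nf; exact Complex.exp_zero
    rw [hexp, Complex.sin]
    have hI := Complex.I_sq
    linear_combination (Complex.exp ((x:ℂ) * Complex.I) *
      (Complex.exp (-(x:ℂ) * Complex.I) - Complex.exp ((x:ℂ) * Complex.I))) * hI - h1
  rw [key, norm_mul, norm_mul, norm_mul, norm_neg, Complex.norm_exp_ofReal_mul_I,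
    Complex.norm_I, ← Complex.ofReal_sin, Complex.norm_real]
  simp

/-- Small-divisor estimate for a Diophantine number `α` of type `τ` with constant `δ`:
`|1 − e^{2πikα}| > 4δ/|k|^{τ−1}` for every nonzero integer `k`. -/
theorem small_divisor_bound
    (α δ τ : ℝ) (hδ : 0 < δ) (hτ : 2 ≤ τ)
    (hdio : ∀ p q : ℤ, q ≠ 0 → δ / |(q : ℝ)| ^ τ < |α - p / q|) :
    ∀ k : ℤ, k ≠ 0 →
      4 * δ / |(k : ℝ)| ^ (τ - 1) <
        ‖1 - Complex.exp (2 * Real.pi * Complex.I * (k : ℂ) * (α : ℂ))‖ := by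
  intro k hk
  have hk0 : (0:ℝ) < |(k:ℝ)| := by
    simp only [abs_pos, Ne, Int.cast_eq_zero]; exact_mod_cast hk
  set p : ℤ := round ((k:ℝ) * α) with hp
  have hround : |(k:ℝ) * α - p| ≤ 1 / 2 := abs_sub_round _
  -- Diophantine bound scaled by |k|
  have hdio' : δ / |(k:ℝ)| ^ (τ - 1) < |(k:ℝ) * α - p| := by
    have h1 := hdio p k hk
    have h2 : |(k:ℝ)| * |α - p / k| = |(k:ℝ) * α - p| := by
      rw [← abs_mul]
      congr 1
      field_simp
    have h3 : |(k:ℝ)| * (δ / |(k:ℝ)| ^ τ) = δ / |(k:ℝ)| ^ (τ - 1) := by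
      have hτk : |(k:ℝ)| ^ τ = |(k:ℝ)| ^ (τ - 1) * |(k:ℝ)| := by
        rw [← Real.rpow_add_one (ne_of_gt hk0) (τ - 1)]
        ring_nf
      rw [hτk]
      have h0 : |(k:ℝ)| ^ (τ - 1) ≠ 0 := by positivity
      field_simp
    calc δ / |(k:ℝ)| ^ (τ - 1) = |(k:ℝ)| * (δ / |(k:ℝ)| ^ τ) := h3.symm
      _ < |(k:ℝ)| * |α - p / k| := (mul_lt_mul_iff_right₀ hk0).mpr h1
      _ = |(k:ℝ) * α - p| := h2
  -- rewrite the complex expression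
  have hrw : (2 : ℂ) * Real.pi * Complex.I * (k : ℂ) * (α : ℂ)
      = ((2 * (Real.pi * (k * α)) : ℝ) : ℂ) * Complex.I := by
    push_cast; ring
  rw [hrw, abs_one_sub_exp (Real.pi * ((k:ℝ) * α))]
  -- sine bound
  have hsin : |Real.sin (Real.pi * ((k:ℝ) * α))|
      = |Real.sin (Real.pi * ((k:ℝ) * α - p))| := by
    have h : Real.pi * ((k:ℝ) * α - p) = Real.pi * ((k:ℝ) * α) - (p : ℝ) * Real.pi := by ring
    rw [h, Real.sin_sub, Real.sin_int_mul_pi, mul_zero, sub_zero, abs_mul,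
      Real.abs_cos_int_mul_pi, mul_one]
  have hjordan : 2 / Real.pi * |Real.pi * ((k:ℝ) * α - p)|
      ≤ |Real.sin (Real.pi * ((k:ℝ) * α - p))| := by
    apply Real.mul_abs_le_abs_sin
    rw [abs_mul, abs_of_pos Real.pi_pos]
    calc Real.pi * |(k:ℝ) * α - p| ≤ Real.pi * (1/2) := by
          exact mul_le_mul_of_nonneg_left hround Real.pi_pos.le
      _ = Real.pi / 2 := by ring
  have hπ : 2 / Real.pi * |Real.pi * ((k:ℝ) * α - p)| = 2 * |(k:ℝ) * α - p| := by
    rw [abs_mul, abs_of_pos Real.pi_pos]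
    field_simp
  have : 4 * δ / |(k:ℝ)| ^ (τ - 1) < 4 * |(k:ℝ) * α - p| := by
    have := hdio'
    rw [mul_div_assoc]
    linarith
  rw [hsin]
  calc 4 * δ / |(k:ℝ)| ^ (τ - 1) < 4 * |(k:ℝ) * α - p| := this
    _ = 2 * (2 * |(k:ℝ) * α - p|) := by ring
    _ ≤ 2 * |Real.sin (Real.pi * ((k:ℝ) * α - p))| := by
        rw [← hπ]; linarith
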